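/- arXiv:1306.3201 — 3 statements merged into one kernel-verified Lean document; each statement's English description precedes it below -/
import Mathlib

section
/- Define I_{lm}(Θ) = ∫₀^Θ X_{lm}(θ) sin θ dθ. Then for l ≥ 2 and 0 ≤ m < l, I_{lm}(Θ) = ((l-2)/(l+1)) √((2l+1)((l-1)²-m²)/((2l-3)(l²-m²))) I_{l-2,m}(Θ) + (1/(l+1)) √((4l²-1)/(l²-m²)) sin²Θ · X_{l-1,m}(Θ). -/
open MeasureTheory intervalIntegral

/-- Associated Legendre function `P_{lm}(x)` of integer degree `l ≥ 0` and order `0 ≤ m`. -/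
noncomputable def legendreP (l m : ℕ) (x : ℝ) : ℝ :=
  (1 / (2 ^ l * (Nat.factorial l : ℝ))) * (1 - x ^ 2) ^ ((m : ℝ) / 2) *
    iteratedDeriv (l + m) (fun t : ℝ => (t ^ 2 - 1) ^ l) x

/-- 4π-normalized associated Legendre function `X_{lm}(θ)`, with the convention
`X_{lm} = 0` for `m < 0` or `m > l`. -/
noncomputable def Xlm (l : ℕ) (m : ℤ) (θ : ℝ) : ℝ :=
  if 0 ≤ m ∧ m ≤ (l : ℤ) then
    (-1 : ℝ) ^ m.toNat * Real.sqrt ((2 * (l : ℝ) + 1) / (4 * Real.pi)) *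
      Real.sqrt ((Nat.factorial (l - m.toNat) : ℝ) / (Nat.factorial (l + m.toNat) : ℝ)) *
      legendreP l m.toNat (Real.cos θ)
  else 0

/-- `I_{lm}(Θ) = ∫₀^Θ X_{lm}(θ) sin θ dθ`. -/
noncomputable def Ilm (l : ℕ) (m : ℤ) (Θ : ℝ) : ℝ :=
  ∫ θ in (0 : ℝ)..Θ, Xlm l m θ * Real.sin θ


open Polynomial Real

noncomputable def uu (j : ℕ) : ℝ[X] := (X ^ 2 - 1) ^ j

lemma deriv_uu (j : ℕ) : derivative (uu (j + 1)) = C (2 * ((j:ℝ) + 1)) * (X * uu j) := by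
  have h2 : (C (2 * ((j:ℝ) + 1)) : ℝ[X]) = C ((j:ℝ) + 1) * C 2 := by
    rw [← map_mul]; ring_nf
  unfold uu
  rw [derivative_pow, h2]
  have h : derivative (X ^ 2 - 1 : ℝ[X]) = C 2 * X := by
    rw [derivative_sub, derivative_X_pow, derivative_one, sub_zero]; norm_num
  rw [h]
  simp only [Nat.add_sub_cancel, Nat.cast_add, Nat.cast_one]
  ring

lemma iter_deriv_X_mul (k : ℕ) (f : ℝ[X]) :
    derivative^[k] (X * f) = X * derivative^[k] f + C (k : ℝ) * derivative^[k - 1] f := by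
  induction k generalizing f with
  | zero => simp
  | succ k ih =>
    rw [Function.iterate_succ_apply, derivative_mul, derivative_X, one_mul]
    rw [show derivative^[k] (f + X * derivative f) =
        derivative^[k] f + derivative^[k] (X * derivative f) by simp [iterate_map_add]]
    rw [ih (derivative f)]
    cases k with
    | zero => simp; ring
    | succ k =>
      rw [show derivative^[k + 1] (derivative f) = derivative^[k + 1 + 1] f from
        (Function.iterate_succ_apply derivative (k+1) f).symm]
      rw [show derivative^[k + 1 - 1] (derivative f) = derivative^[k + 1] f from
        (Function.iterate_succ_apply derivative k f).symm]
      rw [show (((k:ℕ) + 1 + 1 : ℕ) : ℝ) = (((k:ℕ) + 1 : ℕ) : ℝ) + 1 by push_cast; ring,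
        map_add, map_one]
      rw [show ((k:ℕ) + 1 + 1 - 1 : ℕ) = (k:ℕ) + 1 from rfl]
      ring

lemma iter_deriv_X2_mul (k : ℕ) (f : ℝ[X]) :
    derivative^[k] ((X ^ 2 - 1) * f) = (X ^ 2 - 1) * derivative^[k] f
      + C (2 * (k : ℝ)) * (X * derivative^[k - 1] f)
      + C ((k : ℝ) * ((k : ℝ) - 1)) * derivative^[k - 2] f := by
  match k with
  | 0 => simp
  | 1 =>
    simp only [Function.iterate_one, derivative_mul]
    have h : derivative (X ^ 2 - 1 : ℝ[X]) = C 2 * X := by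
      rw [derivative_sub, derivative_X_pow, derivative_one, sub_zero]; norm_num
    rw [h]
    norm_num
    ring
  | (k+2) =>
    have h4 : derivative^[k+2] ((X ^ 2 - 1) * f)
        = derivative^[k+2] (X * (X * f)) - derivative^[k+2] f := by
      rw [← iterate_derivative_sub]; ring_nf
    rw [h4, iter_deriv_X_mul (k+2) (X * f)]
    rw [show (k + 2 - 1 : ℕ) = k + 1 from rfl, iter_deriv_X_mul (k+1) f,
      iter_deriv_X_mul (k+2) f]
    rw [show (k + 1 - 1 : ℕ) = k from rfl, show (k + 2 - 2 : ℕ) = k from rfl]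
    push_cast
    rw [show (C (2 * ((k:ℝ) + 2)) : ℝ[X]) = C 2 * C ((k:ℝ) + 2) from by rw [← map_mul],
      show (C (((k:ℝ) + 2) * ((k:ℝ) + 2 - 1)) : ℝ[X]) = C ((k:ℝ) + 2) * C ((k:ℝ) + 1) from by
        rw [← map_mul]; congr 1; ring]
    simp only [map_ofNat]
    ring

lemma pI1 (n m : ℕ) :
    derivative^[n+m+2] (uu (n+2)) = C (2 * ((n:ℝ) + 2)) *
      (X * derivative^[n+m+1] (uu (n+1)) + C ((n:ℝ) + (m:ℝ) + 1) * derivative^[n+m] (uu (n+1))) := by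
  rw [show (n+m+2 : ℕ) = (n+m+1)+1 from rfl, Function.iterate_succ_apply]
  rw [show (n+2 : ℕ) = (n+1)+1 from rfl, deriv_uu, iterate_derivative_C_mul,
    iter_deriv_X_mul (n+m+1) (uu (n+1))]
  rw [show (n+m+1-1 : ℕ) = n+m from rfl]
  rw [show C (2 * (((n+1:ℕ):ℝ) + 1)) = C (2 * ((n:ℝ) + 2)) from by push_cast; ring_nf,
    show C (((n+m+1:ℕ):ℝ)) = C ((n:ℝ) + (m:ℝ) + 1) from by push_cast; ring_nf]

lemma pI2 (n m : ℕ) :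
    (X ^ 2 - 1) * derivative^[n+m+2] (uu (n+1))
      + C (2 * ((n:ℝ) + (m:ℝ) + 1)) * (X * derivative^[n+m+1] (uu (n+1)))
      + C (((n:ℝ) + (m:ℝ) + 1) * ((n:ℝ) + (m:ℝ))) * derivative^[n+m] (uu (n+1))
    = C (2 * ((n:ℝ) + 1)) *
      (X * derivative^[n+m+1] (uu (n+1)) + C ((n:ℝ) + (m:ℝ) + 1) * derivative^[n+m] (uu (n+1))) := by
  have e : (X ^ 2 - 1 : ℝ[X]) * derivative (uu (n+1)) = C (2 * ((n:ℝ) + 1)) * (X * uu (n+1)) := by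
    rw [deriv_uu]
    unfold uu
    rw [show ((n+1:ℕ)) = n+1 from rfl]
    push_cast
    ring
  have h := congrArg (derivative^[n+m+1]) e
  rw [iter_deriv_X2_mul (n+m+1) (derivative (uu (n+1))), iterate_derivative_C_mul,
    iter_deriv_X_mul (n+m+1) (uu (n+1))] at h
  rw [show (n+m+1-1 : ℕ) = n+m from rfl, show (n+m+1-2 : ℕ) = (n+m)-1 from rfl] at h
  rw [← Function.iterate_succ_apply derivative (n+m+1) (uu (n+1))] at h
  rw [← Function.iterate_succ_apply derivative (n+m) (uu (n+1))] at h
  -- now D^[n+m-1] (derivative (uu (n+1))) remains; fix it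
  have fix : C (((n+m+1:ℕ):ℝ) * (((n+m+1:ℕ):ℝ) - 1)) * derivative^[n+m-1] (derivative (uu (n+1)))
      = C (((n:ℝ) + (m:ℝ) + 1) * ((n:ℝ) + (m:ℝ))) * derivative^[n+m] (uu (n+1)) := by
    match hnm : n + m with
    | 0 =>
      have h0 : ((n:ℝ) + (m:ℝ)) = 0 := by
        have : ((n + m : ℕ) : ℝ) = ((0:ℕ) : ℝ) := by rw [hnm]
        push_cast at this; linarith
      rw [h0]
      norm_num
    | (j+1) =>
      rw [show (j+1-1 : ℕ) = j from rfl, ← Function.iterate_succ_apply derivative j (uu (n+1))]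
      congr 1
      have hn : ((n:ℝ) + (m:ℝ)) = ((j:ℝ) + 1) := by
        have : ((n + m : ℕ) : ℝ) = ((j + 1 : ℕ) : ℝ) := by rw [hnm]
        push_cast at this; linarith
      push_cast
      rw [hn]
      ring_nf
  rw [fix] at h
  rw [show C (2 * (((n+m+1:ℕ)):ℝ)) = C (2 * ((n:ℝ) + (m:ℝ) + 1)) from by push_cast; ring_nf,
    show C (((n+m+1:ℕ):ℝ)) = C ((n:ℝ) + (m:ℝ) + 1) from by push_cast; ring_nf] at h
  simp only [Nat.succ_eq_add_one] at h
  rw [show (n+m+1+1 : ℕ) = n+m+2 from rfl, show (n+m+1 : ℕ) = n+m+1 from rfl] at h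
  linear_combination h

lemma pstar (n m : ℕ) :
    X * derivative^[n+m+1] (uu (n+1)) + C ((n:ℝ) + (m:ℝ)) * derivative^[n+m] (uu (n+1))
    = C (2 * ((n:ℝ) + 1)) * (derivative^[n+m] (uu (n+1)) + derivative^[n+m] (uu n)) := by
  have e : X * derivative (uu (n+1)) = C (2 * ((n:ℝ) + 1)) * (uu (n+1) + uu n) := by
    rw [deriv_uu]
    unfold uu
    push_cast
    ring
  have h := congrArg (derivative^[n+m]) e
  rw [iter_deriv_X_mul (n+m) (derivative (uu (n+1))), iterate_derivative_C_mul] at h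
  rw [show derivative^[n+m] (uu (n+1) + uu n)
      = derivative^[n+m] (uu (n+1)) + derivative^[n+m] (uu n) from by simp [iterate_map_add]] at h
  rw [← Function.iterate_succ_apply derivative (n+m) (uu (n+1))] at h
  have fix : C (((n+m:ℕ)):ℝ) * derivative^[n+m-1] (derivative (uu (n+1)))
      = C ((n:ℝ) + (m:ℝ)) * derivative^[n+m] (uu (n+1)) := by
    match hnm : n + m with
    | 0 =>
      have h0 : ((n:ℝ) + (m:ℝ)) = 0 := by
        have : ((n + m : ℕ) : ℝ) = ((0:ℕ) : ℝ) := by rw [hnm]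
        push_cast at this; linarith
      rw [h0]
      norm_num
    | (j+1) =>
      rw [show (j+1-1 : ℕ) = j from rfl, ← Function.iterate_succ_apply derivative j (uu (n+1))]
      congr 1
      have hn : ((n:ℝ) + (m:ℝ)) = ((j:ℝ) + 1) := by
        have : ((n + m : ℕ) : ℝ) = ((j + 1 : ℕ) : ℝ) := by rw [hnm]
        push_cast at this; linarith
      push_cast
      rw [hn]
  rw [fix] at h
  simp only [Nat.succ_eq_add_one] at h
  linear_combination h

noncomputable def ee (k j : ℕ) (x : ℝ) : ℝ := (derivative^[k] (uu j)).eval x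

lemma eI1 (n m : ℕ) (x : ℝ) :
    ee (n+m+2) (n+2) x = 2 * ((n:ℝ) + 2) *
      (x * ee (n+m+1) (n+1) x + ((n:ℝ) + (m:ℝ) + 1) * ee (n+m) (n+1) x) := by
  unfold ee
  have := congrArg (eval x) (pI1 n m)
  simpa using this

lemma eI2 (n m : ℕ) (x : ℝ) :
    (x ^ 2 - 1) * ee (n+m+2) (n+1) x
      + 2 * ((n:ℝ) + (m:ℝ) + 1) * (x * ee (n+m+1) (n+1) x)
      + ((n:ℝ) + (m:ℝ) + 1) * ((n:ℝ) + (m:ℝ)) * ee (n+m) (n+1) x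
    = 2 * ((n:ℝ) + 1) *
      (x * ee (n+m+1) (n+1) x + ((n:ℝ) + (m:ℝ) + 1) * ee (n+m) (n+1) x) := by
  unfold ee
  have := congrArg (eval x) (pI2 n m)
  simpa using this

lemma estar (n m : ℕ) (x : ℝ) :
    x * ee (n+m+1) (n+1) x + ((n:ℝ) + (m:ℝ)) * ee (n+m) (n+1) x
    = 2 * ((n:ℝ) + 1) * (ee (n+m) (n+1) x + ee (n+m) n x) := by
  unfold ee
  have := congrArg (eval x) (pstar n m)
  simpa using this

lemma ePID (n m : ℕ) (x : ℝ) :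
    2 * ((n:ℝ)+2) * (2 * ((n:ℝ)+2) - 1) *
      (((m:ℝ) + 2) * (x * ee (n+m+1) (n+1) x) + (x ^ 2 - 1) * ee (n+m+2) (n+1) x)
    = (((n:ℝ)+2) - (m:ℝ)) * (((n:ℝ)+2) + 1) * ee (n+m+2) (n+2) x
      - 4 * ((n:ℝ)+2) * ((n:ℝ)+1) * (n:ℝ) * (((n:ℝ)+2) + (m:ℝ) - 1) * ee (n+m) n x := by
  linear_combination (-((((n:ℝ)+2) - (m:ℝ)) * (((n:ℝ)+2) + 1))) * eI1 n m x
    + (2 * ((n:ℝ)+2) * (2 * ((n:ℝ)+2) - 1)) * eI2 n m x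
    + (-(2 * ((n:ℝ)+2) * (n:ℝ) * (((n:ℝ)+2) + (m:ℝ) - 1))) * estar n m x

lemma iteratedDeriv_poly (k : ℕ) (p : ℝ[X]) :
    iteratedDeriv k (fun t : ℝ => p.eval t) = fun x => (derivative^[k] p).eval x := by
  induction k with
  | zero => simp
  | succ k ih =>
    rw [iteratedDeriv_succ, ih]
    funext x
    rw [show (derivative^[k+1] p) = derivative (derivative^[k] p) from
      Function.iterate_succ_apply' derivative k p]
    exact Polynomial.deriv _

lemma rpow_half (mn : ℕ) (θ : ℝ) (hθ : θ ∈ Set.Icc 0 Real.pi) :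
    (1 - Real.cos θ ^ 2) ^ ((mn:ℝ)/2) = Real.sin θ ^ mn := by
  have hs : 0 ≤ Real.sin θ := Real.sin_nonneg_of_nonneg_of_le_pi hθ.1 hθ.2
  have h1 : 1 - Real.cos θ ^ 2 = Real.sin θ ^ 2 := by
    nlinarith [Real.sin_sq_add_cos_sq θ]
  rw [h1, ← Real.rpow_natCast (Real.sin θ) 2, ← Real.rpow_mul hs,
    ← Real.rpow_natCast (Real.sin θ) mn]
  congr 1
  push_cast
  ring

lemma ee_vanish (n k : ℕ) (h : 2 * n < k) (x : ℝ) : ee k n x = 0 := by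
  unfold ee
  rw [Polynomial.iterate_derivative_eq_zero ?_]
  · simp
  · calc ((X ^ 2 - 1 : ℝ[X]) ^ n).natDegree ≤ n * (X ^ 2 - 1 : ℝ[X]).natDegree :=
        Polynomial.natDegree_pow_le
    _ ≤ n * 2 := by
        gcongr
        · compute_degree
    _ < k := by omega

lemma eq_of_sq {a b : ℝ} (ha : 0 ≤ a) (hb : 0 ≤ b) (h : a ^ 2 = b ^ 2) : a = b := by
  nlinarith [sq_nonneg (a - b), sq_nonneg (a + b)]


noncomputable def PP (l mn : ℕ) : ℝ :=
  Real.sqrt ((2 * (l:ℝ) + 1) / (4 * Real.pi)) *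
    Real.sqrt (((l - mn).factorial : ℝ) / ((l + mn).factorial : ℝ)) *
    (1 / (2 ^ l * (l.factorial : ℝ)))

lemma PP_nonneg (l mn : ℕ) : 0 ≤ PP l mn := by
  unfold PP; positivity

lemma PP_sq (l mn : ℕ) : PP l mn ^ 2 =
    ((2 * (l:ℝ) + 1) / (4 * Real.pi)) * (((l - mn).factorial : ℝ) / ((l + mn).factorial : ℝ)) *
      (1 / (2 ^ l * (l.factorial : ℝ))) ^ 2 := by
  unfold PP
  rw [mul_pow, mul_pow, Real.sq_sqrt (by positivity), Real.sq_sqrt (by positivity)]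

set_option maxHeartbeats 1000000 in
lemma S1' (n mn : ℕ) (hc : mn ≤ n) :
    ((((n:ℝ)+2)-(mn:ℝ)) * (((n:ℝ)+2)+1)) *
      ((((n:ℝ)+2) - 2) / (((n:ℝ)+2) + 1) *
        Real.sqrt ((2*((n:ℝ)+2)+1) * ((((n:ℝ)+2)-1)^2 - (mn:ℝ)^2) /
          ((2*((n:ℝ)+2)-3) * (((n:ℝ)+2)^2 - (mn:ℝ)^2))) * PP n mn)
    = 4*((n:ℝ)+2)*((n:ℝ)+1)*(n:ℝ)*(((n:ℝ)+2)+(mn:ℝ)-1) * PP (n+2) mn := by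
  have hmr : (mn:ℝ) ≤ (n:ℝ) := by exact_mod_cast hc
  have hnn : (0:ℝ) ≤ (n:ℝ) := Nat.cast_nonneg n
  have hmn0 : (0:ℝ) ≤ (mn:ℝ) := Nat.cast_nonneg mn
  have key1 : (0:ℝ) ≤ (((n:ℝ)+1)-(mn:ℝ)) * (((n:ℝ)+1)+(mn:ℝ)) :=
    mul_nonneg (by linarith) (by linarith)
  have key2 : (0:ℝ) ≤ (((n:ℝ)+2)-(mn:ℝ)) * (((n:ℝ)+2)+(mn:ℝ)) :=
    mul_nonneg (by linarith) (by linarith)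
  have hQ : (0:ℝ) ≤ (2*((n:ℝ)+2)+1) * ((((n:ℝ)+2)-1)^2 - (mn:ℝ)^2) /
      ((2*((n:ℝ)+2)-3) * (((n:ℝ)+2)^2 - (mn:ℝ)^2)) := by
    apply div_nonneg
    · apply mul_nonneg (by linarith)
      nlinarith [key1]
    · apply mul_nonneg (by linarith)
      nlinarith [key2]
  have hf1 : (((n+2-mn).factorial : ℕ) : ℝ)
      = ((((n:ℝ)+2)-(mn:ℝ)) * ((((n:ℝ)+1)-(mn:ℝ)) * (((n-mn).factorial : ℕ) : ℝ))) := by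
    rw [show n+2-mn = (n-mn)+2 from by omega, Nat.factorial_succ, Nat.factorial_succ]
    push_cast [Nat.cast_sub hc]
    ring
  have hf2 : (((n+2+mn).factorial : ℕ) : ℝ)
      = ((((n:ℝ)+2)+(mn:ℝ)) * ((((n:ℝ)+1)+(mn:ℝ)) * (((n+mn).factorial : ℕ) : ℝ))) := by
    rw [show n+2+mn = (n+mn)+2 from by omega, Nat.factorial_succ, Nat.factorial_succ]
    push_cast
    ring
  have hf3 : (((n+2).factorial : ℕ) : ℝ) = (((n:ℝ)+2) * ((((n:ℝ)+1)) * ((n.factorial : ℕ) : ℝ))) := by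
    rw [Nat.factorial_succ, Nat.factorial_succ]
    push_cast
    ring
  apply eq_of_sq
  · apply mul_nonneg (mul_nonneg (by linarith) (by linarith))
    exact mul_nonneg (mul_nonneg (div_nonneg (by linarith) (by linarith)) (Real.sqrt_nonneg _))
      (PP_nonneg _ _)
  · apply mul_nonneg ?_ (PP_nonneg _ _)
    have h4 : (0:ℝ) ≤ 4*((n:ℝ)+2)*((n:ℝ)+1)*(n:ℝ) := by positivity
    apply mul_nonneg h4 (by linarith)
  · simp only [mul_pow, div_pow]
    rw [PP_sq, PP_sq, Real.sq_sqrt hQ]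
    rw [hf1, hf2, hf3, show ((2:ℝ))^(n+2) = 4 * 2^n from by ring]
    have hpi := Real.pi_pos
    have hfa : (0:ℝ) < ((n-mn).factorial : ℕ) := by exact_mod_cast (n-mn).factorial_pos
    have hfb : (0:ℝ) < ((n+mn).factorial : ℕ) := by exact_mod_cast (n+mn).factorial_pos
    have hfc : (0:ℝ) < (n.factorial : ℕ) := by exact_mod_cast n.factorial_pos
    have h2n : (0:ℝ) < (2:ℝ)^n := by positivity
    have d1 : ((n:ℝ)+2+1) ≠ 0 := by linarith
    have d2 : (2*((n:ℝ)+2)-3) ≠ 0 := by linarith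
    have d3 : (((n:ℝ)+2)-(mn:ℝ)) ≠ 0 := by linarith
    have d4 : (((n:ℝ)+2)^2-(mn:ℝ)^2) ≠ 0 := by nlinarith [key2]
    have d5 : (((n:ℝ)+2)+(mn:ℝ)) ≠ 0 := by linarith
    have d6 : (((n:ℝ)+1)+(mn:ℝ)) ≠ 0 := by linarith
    push_cast
    field_simp [hpi.ne', hfa.ne', hfb.ne', hfc.ne', h2n.ne', d1, d2, d3, d4, d5, d6]
    ring

set_option maxHeartbeats 1000000 in
lemma S2' (n mn : ℕ) (hc : mn ≤ n + 1) :
    2*((n:ℝ)+2)*(2*((n:ℝ)+2)-1) * PP (n+2) mn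
    = ((((n:ℝ)+2)-(mn:ℝ)) * (((n:ℝ)+2)+1)) *
        (1 / (((n:ℝ)+2)+1) *
          Real.sqrt ((4*((n:ℝ)+2)^2-1) / (((n:ℝ)+2)^2 - (mn:ℝ)^2)) * PP (n+1) mn) := by
  have hmr : (mn:ℝ) ≤ (n:ℝ) + 1 := by exact_mod_cast hc
  have hnn : (0:ℝ) ≤ (n:ℝ) := Nat.cast_nonneg n
  have hmn0 : (0:ℝ) ≤ (mn:ℝ) := Nat.cast_nonneg mn
  have key2 : (0:ℝ) < (((n:ℝ)+2)-(mn:ℝ)) * (((n:ℝ)+2)+(mn:ℝ)) :=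
    mul_pos (by linarith) (by linarith)
  have hQ : (0:ℝ) ≤ (4*((n:ℝ)+2)^2-1) / (((n:ℝ)+2)^2 - (mn:ℝ)^2) := by
    apply div_nonneg (by nlinarith)
    nlinarith [key2]
  have hg1 : (((n+2-mn).factorial : ℕ) : ℝ)
      = ((((n:ℝ)+2)-(mn:ℝ)) * (((n+1-mn).factorial : ℕ) : ℝ)) := by
    rw [show n+2-mn = (n+1-mn)+1 from by omega, Nat.factorial_succ]
    push_cast [Nat.cast_sub hc]
    ring
  have hg2 : (((n+2+mn).factorial : ℕ) : ℝ)
      = ((((n:ℝ)+2)+(mn:ℝ)) * (((n+1+mn).factorial : ℕ) : ℝ)) := by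
    rw [show n+2+mn = (n+1+mn)+1 from by omega, Nat.factorial_succ]
    push_cast
    ring
  have hg3 : (((n+2).factorial : ℕ) : ℝ) = (((n:ℝ)+2) * (((n+1).factorial : ℕ) : ℝ)) := by
    rw [Nat.factorial_succ]
    push_cast
    ring
  apply eq_of_sq
  · apply mul_nonneg (by nlinarith) (PP_nonneg _ _)
  · apply mul_nonneg (mul_nonneg (by linarith) (by linarith))
    exact mul_nonneg (mul_nonneg (by positivity) (Real.sqrt_nonneg _)) (PP_nonneg _ _)
  · simp only [mul_pow, div_pow]
    rw [PP_sq, PP_sq, Real.sq_sqrt hQ]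
    rw [hg1, hg2, hg3, show ((2:ℝ))^(n+2) = 2 * 2^(n+1) from by ring]
    have hpi := Real.pi_pos
    have hfa : (0:ℝ) < ((n+1-mn).factorial : ℕ) := by exact_mod_cast (n+1-mn).factorial_pos
    have hfb : (0:ℝ) < ((n+1+mn).factorial : ℕ) := by exact_mod_cast (n+1+mn).factorial_pos
    have hfc : (0:ℝ) < ((n+1).factorial : ℕ) := by exact_mod_cast (n+1).factorial_pos
    have h2n : (0:ℝ) < (2:ℝ)^(n+1) := by positivity
    have d1 : ((n:ℝ)+2+1) ≠ 0 := by linarith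
    have d3 : (((n:ℝ)+2)-(mn:ℝ)) ≠ 0 := by linarith
    have d4 : (((n:ℝ)+2)^2-(mn:ℝ)^2) ≠ 0 := by nlinarith [key2]
    have d5 : (((n:ℝ)+2)+(mn:ℝ)) ≠ 0 := by linarith
    push_cast
    field_simp [hpi.ne', hfa.ne', hfb.ne', hfc.ne', h2n.ne', d1, d3, d4, d5]
    ring


noncomputable def KK (l mn : ℕ) : ℝ :=
  (-1:ℝ) ^ mn * Real.sqrt ((2 * (l:ℝ) + 1) / (4 * Real.pi)) *
    Real.sqrt (((l - mn).factorial : ℝ) / ((l + mn).factorial : ℝ)) *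
    (1 / (2 ^ l * (l.factorial : ℝ)))

lemma KK_PP (l mn : ℕ) : KK l mn = (-1:ℝ) ^ mn * PP l mn := by
  unfold KK PP; ring

lemma Xlm_eq (l mn : ℕ) (h : mn ≤ l) (θ : ℝ) (hθ : θ ∈ Set.Icc 0 Real.pi) :
    Xlm l (mn : ℤ) θ = KK l mn * (Real.sin θ ^ mn * ee (l + mn) l (Real.cos θ)) := by
  unfold KK
  rw [Xlm, if_pos ⟨Int.ofNat_nonneg mn, by exact_mod_cast h⟩, Int.toNat_natCast, legendreP]
  rw [show (fun t : ℝ => (t ^ 2 - 1) ^ l) = (fun t : ℝ => (((X ^ 2 - 1 : ℝ[X]) ^ l)).eval t) from by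
      funext t; simp]
  rw [iteratedDeriv_poly]
  rw [rpow_half mn θ hθ]
  unfold ee uu
  ring

set_option maxHeartbeats 1000000 in
/-- Paul's recursion for `l ≥ 2` and `0 ≤ m < l`. -/
theorem Ilm_recursion (l : ℕ) (m : ℤ) (hl : 2 ≤ l) (hm0 : 0 ≤ m) (hml : m < (l : ℤ))
    (Θ : ℝ) (hΘ : Θ ∈ Set.Icc 0 Real.pi) :
    Ilm l m Θ =
      (((l : ℝ) - 2) / ((l : ℝ) + 1)) *
          Real.sqrt ((2 * (l : ℝ) + 1) * (((l : ℝ) - 1) ^ 2 - (m : ℝ) ^ 2) /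
            ((2 * (l : ℝ) - 3) * ((l : ℝ) ^ 2 - (m : ℝ) ^ 2))) * Ilm (l - 2) m Θ +
        (1 / ((l : ℝ) + 1)) *
          Real.sqrt ((4 * (l : ℝ) ^ 2 - 1) / ((l : ℝ) ^ 2 - (m : ℝ) ^ 2)) *
          (Real.sin Θ) ^ 2 * Xlm (l - 1) m Θ := by
  obtain ⟨n, rfl⟩ : ∃ n, l = n + 2 := ⟨l - 2, by omega⟩
  obtain ⟨mn, rfl⟩ : ∃ k : ℕ, m = (k : ℤ) := ⟨m.toNat, (Int.toNat_of_nonneg hm0).symm⟩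
  have hmn : mn ≤ n + 1 := by omega
  have hΘ0 : (0:ℝ) ≤ Θ := hΘ.1
  have hΘπ : Θ ≤ Real.pi := hΘ.2
  have hsub : Set.uIcc (0:ℝ) Θ ⊆ Set.Icc 0 Real.pi := by
    rw [Set.uIcc_of_le hΘ0]
    exact Set.Icc_subset_Icc le_rfl hΘπ
  have hmr : (mn:ℝ) ≤ (n:ℝ) + 1 := by exact_mod_cast hmn
  have hnn : (0:ℝ) ≤ (n:ℝ) := Nat.cast_nonneg n
  have hmn0 : (0:ℝ) ≤ (mn:ℝ) := Nat.cast_nonneg mn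
  have hd3 : (((n:ℝ)+2) - (mn:ℝ)) ≠ 0 := by linarith
  have hd1 : (((n:ℝ)+2) + 1) ≠ 0 := by linarith
  simp only [show n + 2 - 2 = n from by omega, show n + 2 - 1 = n + 1 from by omega]
  obtain ⟨α, hKlα⟩ : ∃ a : ℝ, KK (n+2) mn = ((((n:ℝ)+2) - (mn:ℝ)) * (((n:ℝ)+2) + 1)) * a :=
    ⟨KK (n+2) mn / ((((n:ℝ)+2) - (mn:ℝ)) * (((n:ℝ)+2) + 1)), by field_simp⟩
  have hXl : ∀ θ ∈ Set.Icc (0:ℝ) Real.pi,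
      Xlm (n+2) (mn:ℤ) θ = KK (n+2) mn * (Real.sin θ ^ mn * ee (n+mn+2) (n+2) (Real.cos θ)) := by
    intro θ hθ'
    have h := Xlm_eq (n+2) mn (by omega) θ hθ'
    rwa [show (n+2)+mn = n+mn+2 from by omega] at h
  have hg' : ∀ θ : ℝ, HasDerivAt
      (fun y : ℝ => 2*((n:ℝ)+2)*(2*((n:ℝ)+2)-1)*α *
        (Real.sin y ^ (mn+2) * ee (n+mn+1) (n+1) (Real.cos y)))
      (KK (n+2) mn * (Real.sin θ ^ (mn+1) * ee (n+mn+2) (n+2) (Real.cos θ))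
        - 4*((n:ℝ)+2)*((n:ℝ)+1)*(n:ℝ)*(((n:ℝ)+2)+(mn:ℝ)-1)*α *
            (Real.sin θ ^ (mn+1) * ee (n+mn) n (Real.cos θ))) θ := by
    intro θ
    have hq : HasDerivAt (fun y : ℝ => ee (n+mn+1) (n+1) (Real.cos y))
        (ee (n+mn+2) (n+1) (Real.cos θ) * -Real.sin θ) θ := by
      have h0 := ((derivative^[n+mn+1] (uu (n+1))).hasDerivAt (Real.cos θ)).comp θ
        (Real.hasDerivAt_cos θ)
      rw [show derivative (derivative^[n+mn+1] (uu (n+1))) = derivative^[n+mn+2] (uu (n+1)) from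
        (Function.iterate_succ_apply' derivative (n+mn+1) (uu (n+1))).symm] at h0
      exact h0
    have hs := (Real.hasDerivAt_sin θ).pow (mn+2)
    have hmul := (hs.mul hq).const_mul (2*((n:ℝ)+2)*(2*((n:ℝ)+2)-1)*α)
    simp only [show mn+2-1 = mn+1 from rfl] at hmul
    refine hmul.congr_deriv ?_
    symm
    have hpid := ePID n mn (Real.cos θ)
    have hsc : Real.sin θ ^ 2 = 1 - Real.cos θ ^ 2 := by nlinarith [Real.sin_sq_add_cos_sq θ]
    rw [hKlα]
    push_cast [Pi.pow_apply]
    linear_combination (-(α * Real.sin θ^(mn+1))) * hpid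
      + (2*((n:ℝ)+2)*(2*((n:ℝ)+2)-1)*α * ee (n+mn+2) (n+1) (Real.cos θ) * Real.sin θ^(mn+1)) * hsc
  have hcF1 : Continuous (fun θ : ℝ =>
      KK (n+2) mn * (Real.sin θ ^ (mn+1) * ee (n+mn+2) (n+2) (Real.cos θ))) := by
    apply continuous_const.mul
    exact (Real.continuous_sin.pow _).mul
      ((Polynomial.continuous (derivative^[n+mn+2] (uu (n+2)))).comp Real.continuous_cos)
  have hcF2 : Continuous (fun θ : ℝ =>
      4*((n:ℝ)+2)*((n:ℝ)+1)*(n:ℝ)*(((n:ℝ)+2)+(mn:ℝ)-1)*α *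
        (Real.sin θ ^ (mn+1) * ee (n+mn) n (Real.cos θ))) := by
    apply continuous_const.mul
    exact (Real.continuous_sin.pow _).mul
      ((Polynomial.continuous (derivative^[n+mn] (uu n))).comp Real.continuous_cos)
  have hint := intervalIntegral.integral_eq_sub_of_hasDerivAt
    (f := fun y : ℝ => 2*((n:ℝ)+2)*(2*((n:ℝ)+2)-1)*α *
        (Real.sin y ^ (mn+2) * ee (n+mn+1) (n+1) (Real.cos y)))
    (f' := fun θ : ℝ => KK (n+2) mn * (Real.sin θ ^ (mn+1) * ee (n+mn+2) (n+2) (Real.cos θ))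
        - 4*((n:ℝ)+2)*((n:ℝ)+1)*(n:ℝ)*(((n:ℝ)+2)+(mn:ℝ)-1)*α *
            (Real.sin θ ^ (mn+1) * ee (n+mn) n (Real.cos θ)))
    (a := 0) (b := Θ)
    (fun θ _ => hg' θ) ((hcF1.sub hcF2).intervalIntegrable 0 Θ)
  rw [Real.sin_zero, zero_pow (by omega : mn+2 ≠ 0), zero_mul, mul_zero, sub_zero] at hint
  have hsplit : (∫ θ in (0:ℝ)..Θ,
        KK (n+2) mn * (Real.sin θ ^ (mn+1) * ee (n+mn+2) (n+2) (Real.cos θ)))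
      - (∫ θ in (0:ℝ)..Θ,
        4*((n:ℝ)+2)*((n:ℝ)+1)*(n:ℝ)*(((n:ℝ)+2)+(mn:ℝ)-1)*α *
          (Real.sin θ ^ (mn+1) * ee (n+mn) n (Real.cos θ)))
      = 2*((n:ℝ)+2)*(2*((n:ℝ)+2)-1)*α *
          (Real.sin Θ ^ (mn+2) * ee (n+mn+1) (n+1) (Real.cos Θ)) := by
    rw [← intervalIntegral.integral_sub (hcF1.intervalIntegrable 0 Θ)
      (hcF2.intervalIntegrable 0 Θ)]
    exact hint
  have hIL : Ilm (n+2) (mn:ℤ) Θ = ∫ θ in (0:ℝ)..Θ,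
      KK (n+2) mn * (Real.sin θ ^ (mn+1) * ee (n+mn+2) (n+2) (Real.cos θ)) := by
    rw [Ilm]
    apply intervalIntegral.integral_congr
    intro θ hθ'
    show Xlm (n+2) (mn:ℤ) θ * Real.sin θ
      = KK (n+2) mn * (Real.sin θ ^ (mn+1) * ee (n+mn+2) (n+2) (Real.cos θ))
    rw [hXl θ (hsub hθ')]
    ring
  have hc1X : ∀ θ ∈ Set.Icc (0:ℝ) Real.pi,
      ((((n:ℝ)+2) - 2) / (((n:ℝ)+2) + 1) *
        Real.sqrt ((2*((n:ℝ)+2)+1) * ((((n:ℝ)+2)-1)^2 - (mn:ℝ)^2) /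
          ((2*((n:ℝ)+2)-3) * (((n:ℝ)+2)^2 - (mn:ℝ)^2)))) * (Xlm n (mn:ℤ) θ * Real.sin θ)
      = 4*((n:ℝ)+2)*((n:ℝ)+1)*(n:ℝ)*(((n:ℝ)+2)+(mn:ℝ)-1)*α *
          (Real.sin θ ^ (mn+1) * ee (n+mn) n (Real.cos θ)) := by
    intro θ hθ'
    by_cases hcase : mn ≤ n
    · have hS1K : ((((n:ℝ)+2) - 2) / (((n:ℝ)+2) + 1) *
          Real.sqrt ((2*((n:ℝ)+2)+1) * ((((n:ℝ)+2)-1)^2 - (mn:ℝ)^2) /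
            ((2*((n:ℝ)+2)-3) * (((n:ℝ)+2)^2 - (mn:ℝ)^2)))) * KK n mn
          = 4*((n:ℝ)+2)*((n:ℝ)+1)*(n:ℝ)*(((n:ℝ)+2)+(mn:ℝ)-1)*α := by
        apply mul_left_cancel₀ (mul_ne_zero hd3 hd1)
        have h := S1' n mn hcase
        have k2 := KK_PP (n+2) mn
        rw [KK_PP n mn]
        linear_combination ((-1:ℝ)^mn) * h
          - (4*((n:ℝ)+2)*((n:ℝ)+1)*(n:ℝ)*(((n:ℝ)+2)+(mn:ℝ)-1)) * k2
          + (4*((n:ℝ)+2)*((n:ℝ)+1)*(n:ℝ)*(((n:ℝ)+2)+(mn:ℝ)-1)) * hKlα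
      rw [Xlm_eq n mn hcase θ hθ']
      linear_combination (Real.sin θ ^ mn * Real.sin θ * ee (n+mn) n (Real.cos θ)) * hS1K
    · have hz : Xlm n (mn:ℤ) θ = 0 := by
        rw [Xlm, if_neg]
        rintro ⟨-, h2⟩
        have : mn ≤ n := by exact_mod_cast h2
        omega
      rw [hz, ee_vanish n (n+mn) (by omega) (Real.cos θ)]
      ring
  have hIn : ((((n:ℝ)+2) - 2) / (((n:ℝ)+2) + 1) *
        Real.sqrt ((2*((n:ℝ)+2)+1) * ((((n:ℝ)+2)-1)^2 - (mn:ℝ)^2) /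
          ((2*((n:ℝ)+2)-3) * (((n:ℝ)+2)^2 - (mn:ℝ)^2)))) * Ilm n (mn:ℤ) Θ
      = ∫ θ in (0:ℝ)..Θ,
        4*((n:ℝ)+2)*((n:ℝ)+1)*(n:ℝ)*(((n:ℝ)+2)+(mn:ℝ)-1)*α *
          (Real.sin θ ^ (mn+1) * ee (n+mn) n (Real.cos θ)) := by
    rw [Ilm, ← intervalIntegral.integral_const_mul]
    apply intervalIntegral.integral_congr
    intro θ hθ'
    exact hc1X θ (hsub hθ')
  have hX1 : Xlm (n+1) (mn:ℤ) Θ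
      = KK (n+1) mn * (Real.sin Θ ^ mn * ee (n+mn+1) (n+1) (Real.cos Θ)) := by
    have h := Xlm_eq (n+1) mn (by omega) Θ hΘ
    rwa [show (n+1)+mn = n+mn+1 from by omega] at h
  have hS2K : 2*((n:ℝ)+2)*(2*((n:ℝ)+2)-1)*α
      = (1 / (((n:ℝ)+2)+1)) * Real.sqrt ((4*((n:ℝ)+2)^2-1) / (((n:ℝ)+2)^2-(mn:ℝ)^2))
          * KK (n+1) mn := by
    apply mul_left_cancel₀ (mul_ne_zero hd3 hd1)
    have h := S2' n mn hmn
    have k2 := KK_PP (n+2) mn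
    have k1 := KK_PP (n+1) mn
    linear_combination (-(2*((n:ℝ)+2)*(2*((n:ℝ)+2)-1))) * hKlα
      + (2*((n:ℝ)+2)*(2*((n:ℝ)+2)-1)) * k2
      + ((-1:ℝ)^mn) * h
      - (((((n:ℝ)+2)-(mn:ℝ)) * (((n:ℝ)+2)+1)) * ((1 / (((n:ℝ)+2)+1)) *
          Real.sqrt ((4*((n:ℝ)+2)^2-1) / (((n:ℝ)+2)^2-(mn:ℝ)^2)))) * k1
  linear_combination (norm := (push_cast; ring1)) hIL + hsplit - hIn
    + (Real.sin Θ ^ 2 * Real.sin Θ ^ mn * ee (n+mn+1) (n+1) (Real.cos Θ)) * hS2K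
    - ((1 / (((n:ℝ)+2)+1)) * Real.sqrt ((4*((n:ℝ)+2)^2-1) / (((n:ℝ)+2)^2-(mn:ℝ)^2))
        * Real.sin Θ ^ 2) * hX1
end

section
/- Define I_{lm}(Θ) = ∫₀^Θ X_{lm}(θ) sin θ dθ. Then for l ≥ 2 and m = l, I_{ll}(Θ) = (1/(l+1)) √((2l+1)/(4l²-4l)) [ l√(2l-1) I_{l-2,l-2}(Θ) − sin²Θ · X_{l-1,l-2}(Θ) ]. -/
open MeasureTheory intervalIntegral

namespace IllAux

open Polynomial

lemma iteratedDeriv_polyeval (p : ℝ[X]) (n : ℕ) :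
    iteratedDeriv n (fun t => p.eval t) = fun t => (Polynomial.derivative^[n] p).eval t := by
  induction n generalizing p with
  | zero => simp
  | succ n ih =>
    rw [iteratedDeriv_succ', Function.iterate_succ_apply]
    have h : (deriv fun t => eval t p) = fun t => eval t (derivative p) := by
      funext x; exact p.deriv
    rw [h, ih]

lemma expand_pow (n : ℕ) : ((X^2 - 1 : ℝ[X])^n) =
      ∑ k ∈ Finset.range (n+1), C ((-1:ℝ)^(n-k) * n.choose k) * X^(2*k) := by
  have : (X^2 - 1 : ℝ[X]) = X^2 + C (-1) := by simp [sub_eq_add_neg]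
  rw [this, add_pow]
  refine Finset.sum_congr rfl fun k hk => ?_
  rw [← pow_mul, ← C_pow, C_mul]
  simp [C_eq_natCast]
  ring

lemma derivA (n : ℕ) :
    Polynomial.derivative^[2*n] ((X^2 - 1 : ℝ[X])^n) = C ((2*n).factorial : ℝ) := by
  rw [expand_pow, iterate_derivative_sum, Finset.sum_eq_single n]
  · rw [iterate_derivative_C_mul, iterate_derivative_X_pow_eq_C_mul]
    simp [Nat.descFactorial_self]
  · intro k hk hne
    rw [iterate_derivative_C_mul, iterate_derivative_X_pow_eq_C_mul]
    have h0 : Nat.descFactorial (2*k) (2*n) = 0 := by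
      apply Nat.descFactorial_eq_zero_iff_lt.mpr
      have := Finset.mem_range.mp hk; omega
    rw [h0]; simp
  · intro h; simp at h

lemma derivB (n : ℕ) :
    Polynomial.derivative^[2*n+1] ((X^2 - 1 : ℝ[X])^(n+1)) = C ((2*n+2).factorial : ℝ) * X := by
  rw [expand_pow, iterate_derivative_sum, Finset.sum_eq_single (n+1)]
  · rw [iterate_derivative_C_mul, iterate_derivative_X_pow_eq_C_mul]
    have h1 : 2*(n+1) - (2*n+1) = 1 := by omega
    have h2 : Nat.descFactorial (2*(n+1)) (2*n+1) = (2*n+2).factorial := by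
      have e1 : (2*n+2).factorial = Nat.descFactorial (2*n+2) (2*n+2) :=
        (Nat.descFactorial_self _).symm
      have e2 : Nat.descFactorial (2*n+2) (2*n+1+1)
          = (2*n+2 - (2*n+1)) * Nat.descFactorial (2*n+2) (2*n+1) :=
        Nat.descFactorial_succ _ _
      simp only [show 2*n+1+1 = 2*n+2 by omega, show 2*n+2-(2*n+1) = 1 by omega, one_mul] at e2
      have h3 : 2*(n+1) = 2*n+2 := by omega
      rw [h3]; omega
    rw [h1, h2]
    simp
  · intro k hk hne
    rw [iterate_derivative_C_mul, iterate_derivative_X_pow_eq_C_mul]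
    have h0 : Nat.descFactorial (2*k) (2*n+1) = 0 := by
      apply Nat.descFactorial_eq_zero_iff_lt.mpr
      have := Finset.mem_range.mp hk; omega
    rw [h0]; simp
  · intro h; simp at h

lemma funeq (l : ℕ) : (fun t : ℝ => (t ^ 2 - 1) ^ l) = fun t => ((X^2 - 1 : ℝ[X])^l).eval t := by
  funext t; simp

lemma sq_rpow_half (s : ℝ) (hs : 0 ≤ s) (m : ℕ) : ((s^2 : ℝ)) ^ ((m:ℝ)/2) = s ^ m := by
  rw [← Real.rpow_natCast s 2, ← Real.rpow_mul hs,
    show (((2:ℕ):ℝ) * ((m:ℝ)/2)) = ((m:ℕ):ℝ) by push_cast; ring, Real.rpow_natCast]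

lemma one_sub_cos_sq_rpow (θ : ℝ) (hs : 0 ≤ Real.sin θ) (m : ℕ) :
    (1 - Real.cos θ ^ 2 : ℝ) ^ ((m:ℝ)/2) = Real.sin θ ^ m := by
  rw [← Real.sin_sq, sq_rpow_half _ hs]

lemma legendreP_self (l : ℕ) (θ : ℝ) (hs : 0 ≤ Real.sin θ) :
    legendreP l l (Real.cos θ) =
      ((2*l).factorial : ℝ) / (2^l * l.factorial) * Real.sin θ ^ l := by
  have h2 : l + l = 2 * l := by omega
  rw [legendreP, funeq, iteratedDeriv_polyeval, h2, derivA, one_sub_cos_sq_rpow θ hs]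
  simp
  ring

lemma legendreP_pred (k : ℕ) (θ : ℝ) (hs : 0 ≤ Real.sin θ) :
    legendreP (k+1) k (Real.cos θ) =
      ((2*k+2).factorial : ℝ) / (2^(k+1) * (k+1).factorial) * Real.sin θ ^ k * Real.cos θ := by
  have h2 : (k+1) + k = 2 * k + 1 := by omega
  rw [legendreP, funeq, iteratedDeriv_polyeval, h2, derivB, one_sub_cos_sq_rpow θ hs]
  simp
  ring

lemma Xlm_self (l : ℕ) (θ : ℝ) (hs : 0 ≤ Real.sin θ) :
    Xlm l (l : ℤ) θ =
      (-1)^l * Real.sqrt ((2*(l:ℝ)+1)/(4*Real.pi)) *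
        Real.sqrt (1/((2*l).factorial : ℝ)) *
        (((2*l).factorial : ℝ)/(2^l * (l.factorial : ℝ))) * Real.sin θ ^ l := by
  rw [Xlm, if_pos ⟨Int.natCast_nonneg l, le_refl _⟩]
  simp only [Int.toNat_natCast]
  rw [legendreP_self l θ hs, show l - l = 0 by omega, show l + l = 2*l by omega]
  simp [Nat.factorial_zero]
  ring

lemma Xlm_pred (k : ℕ) (θ : ℝ) (hs : 0 ≤ Real.sin θ) :
    Xlm (k+1) (k : ℤ) θ =
      (-1)^k * Real.sqrt ((2*((k:ℝ)+1)+1)/(4*Real.pi)) *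
        Real.sqrt (1/((2*k+1).factorial : ℝ)) *
        (((2*k+2).factorial : ℝ)/(2^(k+1) * ((k+1).factorial : ℝ))) *
        Real.sin θ ^ k * Real.cos θ := by
  have hc : (0:ℤ) ≤ (k:ℤ) ∧ (k:ℤ) ≤ ((k+1 : ℕ) : ℤ) := by
    constructor
    · exact Int.natCast_nonneg k
    · exact_mod_cast Nat.le_succ k
  rw [Xlm, if_pos hc]
  simp only [Int.toNat_natCast]
  rw [legendreP_pred k θ hs, show (k+1) - k = 1 by omega, show (k+1) + k = 2*k+1 by omega]
  push_cast
  simp [Nat.factorial_one]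
  ring

lemma sqrt_eq_of (a b A B : ℝ) (ha : 0 ≤ a) (hb : 0 ≤ b) (hA : 0 ≤ A) (hB : 0 ≤ B)
    (h : A * a^2 = B * b^2) : Real.sqrt A * a = Real.sqrt B * b := by
  have h2 : Real.sqrt (A * a^2) = Real.sqrt (B * b^2) := by rw [h]
  rwa [Real.sqrt_mul hA, Real.sqrt_mul hB, Real.sqrt_sq ha, Real.sqrt_sq hb] at h2

lemma fact_cast (n : ℕ) : ((n+1).factorial : ℝ) = ((n:ℝ)+1) * (n.factorial : ℝ) := by
  rw [Nat.factorial_succ]; push_cast; ring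

end IllAux

set_option maxHeartbeats 2000000 in
open IllAux in
/-- Paul's recursion for the sectoral case `m = l`, `l ≥ 2`. -/
theorem Ill_recursion (l : ℕ) (hl : 2 ≤ l) (Θ : ℝ) (hΘ : Θ ∈ Set.Icc 0 Real.pi) :
    Ilm l (l : ℤ) Θ =
      (1 / ((l : ℝ) + 1)) *
        Real.sqrt ((2 * (l : ℝ) + 1) / (4 * (l : ℝ) ^ 2 - 4 * (l : ℝ))) *
        ((l : ℝ) * Real.sqrt (2 * (l : ℝ) - 1) * Ilm (l - 2) ((l : ℤ) - 2) Θ -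
          (Real.sin Θ) ^ 2 * Xlm (l - 1) ((l : ℤ) - 2) Θ) := by
  obtain ⟨k, rfl⟩ : ∃ k, l = k + 2 := ⟨l - 2, by omega⟩
  obtain ⟨h0, hπ⟩ := hΘ
  have hsinΘ : 0 ≤ Real.sin Θ := Real.sin_nonneg_of_nonneg_of_le_pi h0 hπ
  have hsin : ∀ θ ∈ Set.uIcc (0:ℝ) Θ, 0 ≤ Real.sin θ := by
    intro θ hθ
    rw [Set.uIcc_of_le h0] at hθ
    exact Real.sin_nonneg_of_nonneg_of_le_pi hθ.1 (hθ.2.trans hπ)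
  -- index normalizations
  have idx1 : k + 2 - 2 = k := by omega
  have idx2 : k + 2 - 1 = k + 1 := by omega
  have idx3 : ((k+2 : ℕ) : ℤ) - 2 = (k : ℤ) := by push_cast; ring
  rw [idx1, idx2, idx3]
  have hI1 : Ilm (k+2) ((k+2:ℕ):ℤ) Θ
      = ((-1:ℝ)^(k+2) * Real.sqrt ((2*((k+2:ℕ):ℝ)+1)/(4*Real.pi)) *
         Real.sqrt (1/((2*(k+2)).factorial : ℝ)) *
         (((2*(k+2)).factorial : ℝ)/(2^(k+2) * ((k+2).factorial : ℝ))))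
        * ∫ θ in (0:ℝ)..Θ, Real.sin θ^(k+3) := by
    rw [Ilm, ← intervalIntegral.integral_const_mul]
    apply intervalIntegral.integral_congr
    intro θ hθ
    dsimp only
    rw [Xlm_self (k+2) θ (hsin θ hθ)]
    ring
  have hI2 : Ilm k (k:ℤ) Θ
      = ((-1:ℝ)^k * Real.sqrt ((2*(k:ℝ)+1)/(4*Real.pi)) *
         Real.sqrt (1/((2*k).factorial : ℝ)) *
         (((2*k).factorial : ℝ)/(2^k * (k.factorial : ℝ))))
        * ∫ θ in (0:ℝ)..Θ, Real.sin θ^(k+1) := by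
    rw [Ilm, ← intervalIntegral.integral_const_mul]
    apply intervalIntegral.integral_congr
    intro θ hθ
    dsimp only
    rw [Xlm_self k θ (hsin θ hθ)]
    ring
  have hX : Real.sin Θ^2 * Xlm (k+1) (k:ℤ) Θ
      = ((-1:ℝ)^k * Real.sqrt ((2*((k:ℝ)+1)+1)/(4*Real.pi)) *
         Real.sqrt (1/((2*k+1).factorial : ℝ)) *
         (((2*k+2).factorial : ℝ)/(2^(k+1) * ((k+1).factorial : ℝ))))
        * (Real.cos Θ * Real.sin Θ^(k+2)) := by
    rw [Xlm_pred k Θ hsinΘ]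
    ring
  have hred : (∫ θ in (0:ℝ)..Θ, Real.sin θ^(k+3))
      = ((k:ℝ)+2)/((k:ℝ)+3) * (∫ θ in (0:ℝ)..Θ, Real.sin θ^(k+1))
        - Real.sin Θ^(k+2) * Real.cos Θ / ((k:ℝ)+3) := by
    have h := integral_sin_pow (a := 0) (b := Θ) (k+1)
    rw [show k+1+2 = k+3 by omega] at h
    rw [h]
    simp [Real.sin_zero]
    ring
  -- positivity facts
  have hc : (0:ℝ) ≤ (k:ℝ) := Nat.cast_nonneg k
  have hπ0 : (0:ℝ) < Real.pi := Real.pi_pos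
  have hden : (0:ℝ) < 4*((k+2:ℕ):ℝ)^2 - 4*((k+2:ℕ):ℝ) := by push_cast; nlinarith
  have hF0 : (0:ℝ) < ((2*k).factorial : ℝ) := by exact_mod_cast (2*k).factorial_pos
  have hF1 : (0:ℝ) < ((2*(k+2)).factorial : ℝ) := by exact_mod_cast (2*(k+2)).factorial_pos
  have hF3 : (0:ℝ) < ((2*k+1).factorial : ℝ) := by exact_mod_cast (2*k+1).factorial_pos
  have hF4 : (0:ℝ) < ((2*k+2).factorial : ℝ) := by exact_mod_cast (2*k+2).factorial_pos
  have hG0 : (0:ℝ) < (k.factorial : ℝ) := by exact_mod_cast k.factorial_pos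
  have hG1 : (0:ℝ) < ((k+2).factorial : ℝ) := by exact_mod_cast (k+2).factorial_pos
  have hG2 : (0:ℝ) < ((k+1).factorial : ℝ) := by exact_mod_cast (k+1).factorial_pos
  have hKarg : (0:ℝ) ≤ (2*((k+2:ℕ):ℝ)+1)/(4*((k+2:ℕ):ℝ)^2 - 4*((k+2:ℕ):ℝ)) := by
    apply div_nonneg _ hden.le
    push_cast; nlinarith
  have hDd : (0:ℝ) ≤ 2*((k+2:ℕ):ℝ)-1 := by push_cast; nlinarith
  -- factorial expansions
  have f1 : ((2*(k+2)).factorial : ℝ)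
      = (2*(k:ℝ)+4)*(2*(k:ℝ)+3)*(2*(k:ℝ)+2)*(2*(k:ℝ)+1)*((2*k).factorial : ℝ) := by
    rw [show 2*(k+2) = (2*k+3)+1 by omega, fact_cast, show 2*k+3 = (2*k+2)+1 by omega,
      fact_cast, show 2*k+2 = (2*k+1)+1 by omega, fact_cast,
      show 2*k+1 = (2*k)+1 by omega, fact_cast]
    push_cast; ring
  have f2 : (((k+2)).factorial : ℝ) = ((k:ℝ)+2)*((k:ℝ)+1)*(k.factorial : ℝ) := by
    rw [show k+2 = (k+1)+1 by omega, fact_cast, fact_cast]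
    push_cast; ring
  have f3 : ((2*k+1).factorial : ℝ) = (2*(k:ℝ)+1)*((2*k).factorial : ℝ) := by
    rw [show 2*k+1 = (2*k)+1 by omega, fact_cast]
    push_cast; ring
  have f4 : ((2*k+2).factorial : ℝ)
      = (2*(k:ℝ)+2)*(2*(k:ℝ)+1)*((2*k).factorial : ℝ) := by
    rw [show 2*k+2 = (2*k+1)+1 by omega, fact_cast, show 2*k+1 = (2*k)+1 by omega, fact_cast]
    push_cast; ring
  have f5 : ((k+1).factorial : ℝ) = ((k:ℝ)+1)*(k.factorial : ℝ) := fact_cast k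
  -- the two constant identities
  have key1 : Real.sqrt ((2*((k+2:ℕ):ℝ)+1)/(4*Real.pi)) *
        Real.sqrt (1/((2*(k+2)).factorial : ℝ)) *
        (((2*(k+2)).factorial : ℝ)/(2^(k+2) * ((k+2).factorial : ℝ)))
      = Real.sqrt ((2*((k+2:ℕ):ℝ)+1)/(4*((k+2:ℕ):ℝ)^2 - 4*((k+2:ℕ):ℝ))) *
        Real.sqrt (2*((k+2:ℕ):ℝ)-1) *
        Real.sqrt ((2*(k:ℝ)+1)/(4*Real.pi)) * Real.sqrt (1/((2*k).factorial : ℝ)) *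
        (((2*k).factorial : ℝ)/(2^k * (k.factorial : ℝ))) := by
    have m1 : (0:ℝ) ≤ (2*((k+2:ℕ):ℝ)+1)/(4*Real.pi) := by positivity
    have m2 : (0:ℝ) ≤ (2*((k+2:ℕ):ℝ)+1)/(4*((k+2:ℕ):ℝ)^2 - 4*((k+2:ℕ):ℝ)) * (2*((k+2:ℕ):ℝ)-1) :=
      mul_nonneg hKarg hDd
    have m3 : (0:ℝ) ≤ (2*((k+2:ℕ):ℝ)+1)/(4*((k+2:ℕ):ℝ)^2 - 4*((k+2:ℕ):ℝ)) * (2*((k+2:ℕ):ℝ)-1)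
        * ((2*(k:ℝ)+1)/(4*Real.pi)) := by
      apply mul_nonneg m2; positivity
    rw [← Real.sqrt_mul m1, ← Real.sqrt_mul hKarg, ← Real.sqrt_mul m2, ← Real.sqrt_mul m3]
    apply sqrt_eq_of
    · positivity
    · positivity
    · positivity
    · apply mul_nonneg m3; positivity
    · rw [f1, f2]
      have hπ' : Real.pi ≠ 0 := ne_of_gt hπ0
      have hd' : (4*((k+2:ℕ):ℝ)^2 - 4*((k+2:ℕ):ℝ)) ≠ 0 := ne_of_gt hden
      push_cast
      push_cast at hd'
      have hk1 : (k:ℝ)+1 ≠ 0 := by positivity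
      have hk2 : (k:ℝ)+2 ≠ 0 := by positivity
      rw [show (4*((k:ℝ)+2)^2 - 4*((k:ℝ)+2)) = 4*((k:ℝ)+2)*((k:ℝ)+1) by ring]
      field_simp
      ring
  have key2 : Real.sqrt ((2*((k+2:ℕ):ℝ)+1)/(4*Real.pi)) *
        Real.sqrt (1/((2*(k+2)).factorial : ℝ)) *
        (((2*(k+2)).factorial : ℝ)/(2^(k+2) * ((k+2).factorial : ℝ)))
      = Real.sqrt ((2*((k+2:ℕ):ℝ)+1)/(4*((k+2:ℕ):ℝ)^2 - 4*((k+2:ℕ):ℝ))) *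
        Real.sqrt ((2*((k:ℝ)+1)+1)/(4*Real.pi)) * Real.sqrt (1/((2*k+1).factorial : ℝ)) *
        (((2*k+2).factorial : ℝ)/(2^(k+1) * ((k+1).factorial : ℝ))) := by
    have m1 : (0:ℝ) ≤ (2*((k+2:ℕ):ℝ)+1)/(4*Real.pi) := by positivity
    have m2 : (0:ℝ) ≤ (2*((k+2:ℕ):ℝ)+1)/(4*((k+2:ℕ):ℝ)^2 - 4*((k+2:ℕ):ℝ))
        * ((2*((k:ℝ)+1)+1)/(4*Real.pi)) := by
      apply mul_nonneg hKarg; positivity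
    rw [← Real.sqrt_mul m1, ← Real.sqrt_mul hKarg, ← Real.sqrt_mul m2]
    apply sqrt_eq_of
    · positivity
    · positivity
    · positivity
    · apply mul_nonneg m2; positivity
    · rw [f1, f2, f3, f4, f5]
      have hπ' : Real.pi ≠ 0 := ne_of_gt hπ0
      have hd' : (4*((k+2:ℕ):ℝ)^2 - 4*((k+2:ℕ):ℝ)) ≠ 0 := ne_of_gt hden
      push_cast
      push_cast at hd'
      have hk1 : (k:ℝ)+1 ≠ 0 := by positivity
      have hk2 : (k:ℝ)+2 ≠ 0 := by positivity
      rw [show (4*((k:ℝ)+2)^2 - 4*((k:ℝ)+2)) = 4*((k:ℝ)+2)*((k:ℝ)+1) by ring]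
      field_simp
      ring
  rw [hI1, hI2, hX, hred]
  push_cast at key1 key2 ⊢
  linear_combination
    (((-1:ℝ))^k * (((k:ℝ)+2)/((k:ℝ)+3)) * (∫ θ in (0:ℝ)..Θ, Real.sin θ^(k+1))) * key1
    - (((-1:ℝ))^k * Real.cos Θ * Real.sin Θ^(k+2) / ((k:ℝ)+3)) * key2
end

section
/- For an axisymmetric polar cap of radius Θ, the cross matrix element between tangential harmonics is D_{lm,l'm'} = −2π δ_{−m,m'} m X_{lm}(Θ) X_{l'm}(Θ) / √(l(l+1) l'(l'+1)); in particular D_{lm,l'm'} = 0 whenever m' ≠ −m, and D vanishes identically on the order-0 block. -/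
open MeasureTheory intervalIntegral

/-- Real scalar spherical harmonic `Y_{lm}(θ,φ)` (real convention of the paper). -/
noncomputable def Ysph (l : ℕ) (m : ℤ) (θ φ : ℝ) : ℝ :=
  if m < 0 then Real.sqrt 2 * Xlm l |m| θ * Real.cos ((m : ℝ) * φ)
  else if m = 0 then Xlm l 0 θ
  else Real.sqrt 2 * Xlm l m θ * Real.sin ((m : ℝ) * φ)

/-- Radial vector spherical harmonic `P_{lm} = r̂ Y_{lm}`, expressed by its
components in the orthonormal frame `(r̂, θ̂, φ̂)`. -/
noncomputable def Pv (l : ℕ) (m : ℤ) (θ φ : ℝ) : Fin 3 → ℝ :=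
  ![Ysph l m θ φ, 0, 0]

/-- Tangential vector spherical harmonic `B_{lm} = ∇₁Y_{lm}/√(l(l+1))`,
components in the frame `(r̂, θ̂, φ̂)`. -/
noncomputable def Bv (l : ℕ) (m : ℤ) (θ φ : ℝ) : Fin 3 → ℝ :=
  (Real.sqrt ((l : ℝ) * ((l : ℝ) + 1)))⁻¹ •
    ![0, deriv (fun t => Ysph l m t φ) θ,
      (Real.sin θ)⁻¹ * deriv (fun p => Ysph l m θ p) φ]

/-- Tangential vector spherical harmonic `C_{lm} = -r̂ × ∇₁Y_{lm}/√(l(l+1))`,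
components in the frame `(r̂, θ̂, φ̂)`. -/
noncomputable def Cv (l : ℕ) (m : ℤ) (θ φ : ℝ) : Fin 3 → ℝ :=
  (Real.sqrt ((l : ℝ) * ((l : ℝ) + 1)))⁻¹ •
    ![0, (Real.sin θ)⁻¹ * deriv (fun p => Ysph l m θ p) φ,
      -deriv (fun t => Ysph l m t φ) θ]

/-- Euclidean dot product of the `(r̂, θ̂, φ̂)`-components. -/
noncomputable def dot3 (u v : Fin 3 → ℝ) : ℝ := ∑ i, u i * v i

/-- Integral over the whole unit sphere, `∫_Ω f dΩ`, in spherical coordinates. -/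
noncomputable def sphereInt (f : ℝ → ℝ → ℝ) : ℝ :=
  ∫ θ in (0 : ℝ)..Real.pi, ∫ φ in (0 : ℝ)..(2 * Real.pi), f θ φ * Real.sin θ

/-- Integral over a region `R ⊆ Ω`, `∫_R f dΩ`, with `R` given in spherical
coordinates `(θ, φ)`. -/
noncomputable def regionInt (R : Set (ℝ × ℝ)) (f : ℝ → ℝ → ℝ) : ℝ :=
  ∫ p in R, f p.1 p.2 * Real.sin p.1


/-! ### Auxiliary trigonometric integrals -/

private lemma hd_sin' (c x : ℝ) : HasDerivAt (fun y => Real.sin (c*y)) (Real.cos (c*x) * c) x := by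
  simpa using ((hasDerivAt_id x).const_mul c).sin

private lemma hd_cos' (c x : ℝ) : HasDerivAt (fun y => Real.cos (c*y)) (-Real.sin (c*x) * c) x := by
  simpa using ((hasDerivAt_id x).const_mul c).cos

private lemma intJ (k : ℤ) :
    (∫ x in (0:ℝ)..(2*Real.pi), Real.cos (k*x)) = if k = 0 then 2*Real.pi else 0 := by
  rcases eq_or_ne k 0 with h | h
  · simp [h]
  · rw [if_neg h]
    have key : ∀ x : ℝ, HasDerivAt (fun y => Real.sin (k*y)/k) (Real.cos (k*x)) x := by
      intro x
      have := (hd_sin' k x).div_const (k:ℝ)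
      have hk : (k:ℝ) ≠ 0 := Int.cast_ne_zero.mpr h
      simpa [mul_div_assoc, mul_div_cancel_right₀ _ hk] using this
    rw [intervalIntegral.integral_eq_sub_of_hasDerivAt (fun x _ => key x)
      ((Real.continuous_cos.comp (continuous_const.mul continuous_id)).intervalIntegrable _ _)]
    have h1 : Real.sin ((k:ℝ)*(2*Real.pi)) = 0 := by
      have := Real.sin_int_mul_pi (2*k)
      push_cast at this ⊢
      rw [show (k:ℝ)*(2*Real.pi) = 2*(k:ℝ)*Real.pi by ring]
      exact this
    simp [h1]

private lemma intS (k : ℤ) : (∫ x in (0:ℝ)..(2*Real.pi), Real.sin (k*x)) = 0 := by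
  rcases eq_or_ne k 0 with h | h
  · simp [h]
  · have key : ∀ x : ℝ, HasDerivAt (fun y => -Real.cos (k*y)/k) (Real.sin (k*x)) x := by
      intro x
      have := ((hd_cos' k x).neg).div_const (k:ℝ)
      have hk : (k:ℝ) ≠ 0 := Int.cast_ne_zero.mpr h
      simpa [mul_div_assoc, mul_div_cancel_right₀ _ hk] using this
    rw [intervalIntegral.integral_eq_sub_of_hasDerivAt (fun x _ => key x)
      ((Real.continuous_sin.comp (continuous_const.mul continuous_id)).intervalIntegrable _ _)]
    have h1 : Real.cos ((k:ℝ)*(2*Real.pi)) = 1 := by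
      have := Real.cos_int_mul_two_pi k
      push_cast at this
      exact this
    simp [h1]

private lemma contc (k : ℤ) : Continuous (fun x : ℝ => Real.cos (k*x)) :=
  Real.continuous_cos.comp (continuous_const.mul continuous_id)
private lemma conts (k : ℤ) : Continuous (fun x : ℝ => Real.sin (k*x)) :=
  Real.continuous_sin.comp (continuous_const.mul continuous_id)

private lemma intCC (a b : ℤ) : (∫ x in (0:ℝ)..(2*Real.pi), Real.cos (a*x) * Real.cos (b*x)) =
    (if a = b then Real.pi else 0) + (if a = -b then Real.pi else 0) := by
  have key : ∀ x : ℝ, Real.cos (a*x) * Real.cos (b*x)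
      = Real.cos ((a-b : ℤ)*x)/2 + Real.cos ((a+b : ℤ)*x)/2 := by
    intro x
    push_cast
    rw [show ((a:ℝ)-b)*x = a*x - b*x by ring, show ((a:ℝ)+b)*x = a*x + b*x by ring,
      Real.cos_sub, Real.cos_add]
    ring
  rw [intervalIntegral.integral_congr (fun x _ => key x),
    intervalIntegral.integral_add (((contc _).div_const 2).intervalIntegrable _ _)
      (((contc _).div_const 2).intervalIntegrable _ _),
    intervalIntegral.integral_div, intervalIntegral.integral_div, intJ, intJ]
  simp only [sub_eq_zero, add_eq_zero_iff_eq_neg]; split_ifs <;> ring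

private lemma intSS (a b : ℤ) : (∫ x in (0:ℝ)..(2*Real.pi), Real.sin (a*x) * Real.sin (b*x)) =
    (if a = b then Real.pi else 0) - (if a = -b then Real.pi else 0) := by
  have key : ∀ x : ℝ, Real.sin (a*x) * Real.sin (b*x)
      = Real.cos ((a-b : ℤ)*x)/2 - Real.cos ((a+b : ℤ)*x)/2 := by
    intro x
    push_cast
    rw [show ((a:ℝ)-b)*x = a*x - b*x by ring, show ((a:ℝ)+b)*x = a*x + b*x by ring,
      Real.cos_sub, Real.cos_add]
    ring
  rw [intervalIntegral.integral_congr (fun x _ => key x),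
    intervalIntegral.integral_sub (((contc _).div_const 2).intervalIntegrable _ _)
      (((contc _).div_const 2).intervalIntegrable _ _),
    intervalIntegral.integral_div, intervalIntegral.integral_div, intJ, intJ]
  simp only [sub_eq_zero, add_eq_zero_iff_eq_neg]; split_ifs <;> ring

private lemma intSC (a b : ℤ) : (∫ x in (0:ℝ)..(2*Real.pi), Real.sin (a*x) * Real.cos (b*x)) = 0 := by
  have key : ∀ x : ℝ, Real.sin (a*x) * Real.cos (b*x)
      = Real.sin ((a+b : ℤ)*x)/2 + Real.sin ((a-b : ℤ)*x)/2 := by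
    intro x
    push_cast
    rw [show ((a:ℝ)-b)*x = a*x - b*x by ring, show ((a:ℝ)+b)*x = a*x + b*x by ring,
      Real.sin_sub, Real.sin_add]
    ring
  rw [intervalIntegral.integral_congr (fun x _ => key x),
    intervalIntegral.integral_add (((conts _).div_const 2).intervalIntegrable _ _)
      (((conts _).div_const 2).intervalIntegrable _ _),
    intervalIntegral.integral_div, intervalIntegral.integral_div, intS, intS]
  norm_num

/-! ### Angular factor decomposition of `Ysph` -/

/-- Azimuthal factor of `Y_{lm}`. -/
noncomputable def gtrig (m : ℤ) (φ : ℝ) : ℝ :=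
  if m < 0 then Real.cos (m*φ) else if m = 0 then 1 else Real.sin (m*φ)

/-- Derivative of the azimuthal factor. -/
noncomputable def dgtrig (m : ℤ) (φ : ℝ) : ℝ :=
  if m < 0 then -(m:ℝ) * Real.sin (m*φ) else if m = 0 then 0 else (m:ℝ) * Real.cos (m*φ)

/-- Polar factor of `Y_{lm}`. -/
noncomputable def Fth (l : ℕ) (m : ℤ) (θ : ℝ) : ℝ :=
  if m = 0 then Xlm l 0 θ else Real.sqrt 2 * Xlm l |m| θ

private lemma hasDerivAt_gtrig (m : ℤ) (φ : ℝ) : HasDerivAt (gtrig m) (dgtrig m φ) φ := by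
  unfold gtrig dgtrig
  rcases lt_trichotomy m 0 with h | h | h
  · simp only [if_pos h]
    have := hd_cos' (m:ℝ) φ
    convert this using 1
    ring
  · simp [h]
    exact hasDerivAt_const φ 1
  · simp only [if_neg (by omega : ¬ m < 0), if_neg (by omega : ¬ m = 0)]
    have := hd_sin' (m:ℝ) φ
    convert this using 1
    ring

private lemma cont_gtrig (m : ℤ) : Continuous (gtrig m) := by
  unfold gtrig; split_ifs <;> first | exact contc m | exact continuous_const | exact conts m

private lemma cont_dgtrig (m : ℤ) : Continuous (dgtrig m) := by
  unfold dgtrig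
  split_ifs
  · exact continuous_const.mul (conts m)
  · exact continuous_const
  · exact continuous_const.mul (contc m)

private lemma Ysph_eq (l : ℕ) (m : ℤ) (θ φ : ℝ) : Ysph l m θ φ = Fth l m θ * gtrig m φ := by
  unfold Ysph Fth gtrig
  rcases lt_trichotomy m 0 with h | h | h
  · rw [if_pos h, if_neg (by omega : ¬ m = 0), if_pos h]
  · simp [h]
  · rw [if_neg (by omega : ¬ m < 0), if_neg (by omega : ¬ m = 0),
      if_neg (by omega : ¬ m < 0), if_neg (by omega : ¬ m = 0),
      if_neg (by omega : ¬ m = 0), abs_of_pos h]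

private lemma deriv_Ysph_phi (l : ℕ) (m : ℤ) (θ φ : ℝ) :
    deriv (fun p => Ysph l m θ p) φ = Fth l m θ * dgtrig m φ := by
  have h : (fun p => Ysph l m θ p) = fun p => Fth l m θ * gtrig m p :=
    funext fun p => Ysph_eq l m θ p
  rw [h, deriv_const_mul_field, (hasDerivAt_gtrig m φ).deriv]

private lemma deriv_Ysph_theta (l : ℕ) (m : ℤ) (θ φ : ℝ) :
    deriv (fun t => Ysph l m t φ) θ = gtrig m φ * deriv (Fth l m) θ := by
  have h : (fun t => Ysph l m t φ) = fun t => gtrig m φ * Fth l m t :=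
    funext fun t => (Ysph_eq l m t φ).trans (mul_comm _ _)
  rw [h, deriv_const_mul_field]

private lemma intA1 (m m' : ℤ) : (∫ φ in (0:ℝ)..(2*Real.pi), gtrig m φ * dgtrig m' φ)
    = if m' = -m then -(m:ℝ)*Real.pi else 0 := by
  unfold gtrig dgtrig
  rcases lt_trichotomy m 0 with hm | hm | hm <;>
    rcases lt_trichotomy m' 0 with hm' | hm' | hm'
  · -- m<0, m'<0
    simp only [if_pos hm, if_pos hm']
    rw [show (fun φ:ℝ => Real.cos (m*φ) * (-(m':ℝ) * Real.sin (m'*φ)))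
        = fun φ:ℝ => -(m':ℝ) * (Real.sin (m'*φ) * Real.cos (m*φ)) from funext fun φ => by ring,
      intervalIntegral.integral_const_mul, intSC]
    rw [if_neg (by omega)]; ring
  · subst hm'; rw [if_neg (by omega : ¬ (0:ℤ) = -m)]; simp [if_pos hm]
  · -- m<0, m'>0
    simp only [if_pos hm, if_neg (by omega : ¬ m' < 0), if_neg (by omega : ¬ m' = 0)]
    rw [show (fun φ:ℝ => Real.cos (m*φ) * ((m':ℝ) * Real.cos (m'*φ)))
        = fun φ:ℝ => (m':ℝ) * (Real.cos (m'*φ) * Real.cos (m*φ)) from funext fun φ => by ring,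
      intervalIntegral.integral_const_mul, intCC]
    rw [if_neg (by omega : ¬ m' = m)]
    by_cases h : m' = -m
    · rw [if_pos h, if_pos h]; push_cast [h]; ring
    · rw [if_neg h, if_neg h]; ring
  · -- m=0, m'<0
    simp only [hm, if_neg (by omega : ¬ (0:ℤ) < 0), eq_self_iff_true, if_true, one_mul, if_pos hm']
    rw [intervalIntegral.integral_const_mul, intS]
    rw [if_neg (by omega)]; ring
  · simp [hm, hm']
  · simp only [hm, if_neg (by omega : ¬ (0:ℤ) < 0), eq_self_iff_true, if_true, one_mul,
      if_neg (by omega : ¬ m' < 0), if_neg (by omega : ¬ m' = 0)]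
    rw [intervalIntegral.integral_const_mul, intJ, if_neg (by omega : ¬ m' = 0),
      if_neg (by omega : ¬ m' = -(0:ℤ))]
    ring
  · -- m>0, m'<0
    simp only [if_neg (by omega : ¬ m < 0), if_neg (by omega : ¬ m = 0), if_pos hm']
    rw [show (fun φ:ℝ => Real.sin (m*φ) * (-(m':ℝ) * Real.sin (m'*φ)))
        = fun φ:ℝ => -(m':ℝ) * (Real.sin (m*φ) * Real.sin (m'*φ)) from funext fun φ => by ring,
      intervalIntegral.integral_const_mul, intSS]
    rw [if_neg (by omega : ¬ m = m')]
    by_cases h : m' = -m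
    · rw [if_pos (by omega : m = -m'), if_pos h]; push_cast [h]; ring
    · rw [if_neg (by omega : ¬ m = -m'), if_neg h]; ring
  · simp [hm', if_neg (by omega : ¬ m < 0), if_neg (by omega : ¬ m = 0),
      if_neg (by omega : ¬ (0:ℤ) = -m)]
  · -- m>0, m'>0
    simp only [if_neg (by omega : ¬ m < 0), if_neg (by omega : ¬ m = 0),
      if_neg (by omega : ¬ m' < 0), if_neg (by omega : ¬ m' = 0)]
    rw [show (fun φ:ℝ => Real.sin (m*φ) * ((m':ℝ) * Real.cos (m'*φ)))
        = fun φ:ℝ => (m':ℝ) * (Real.sin (m*φ) * Real.cos (m'*φ)) from funext fun φ => by ring,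
      intervalIntegral.integral_const_mul, intSC]
    rw [if_neg (by omega)]; ring

private lemma intA2 (m m' : ℤ) : (∫ φ in (0:ℝ)..(2*Real.pi), dgtrig m φ * gtrig m' φ)
    = if m' = -m then (m:ℝ)*Real.pi else 0 := by
  unfold gtrig dgtrig
  rcases lt_trichotomy m 0 with hm | hm | hm <;>
    rcases lt_trichotomy m' 0 with hm' | hm' | hm'
  · -- m<0, m'<0
    simp only [if_pos hm, if_pos hm']
    rw [show (fun φ:ℝ => (-(m:ℝ) * Real.sin (m*φ)) * Real.cos (m'*φ))
        = fun φ:ℝ => -(m:ℝ) * (Real.sin (m*φ) * Real.cos (m'*φ)) from funext fun φ => by ring,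
      intervalIntegral.integral_const_mul, intSC]
    rw [if_neg (by omega)]; ring
  · simp only [hm', if_pos hm, if_neg (by omega : ¬ (0:ℤ) < 0), eq_self_iff_true, if_true, mul_one]
    rw [intervalIntegral.integral_const_mul, intS, if_neg (by omega : ¬ (0:ℤ) = -m)]
    ring
  · -- m<0, m'>0
    simp only [if_pos hm, if_neg (by omega : ¬ m' < 0), if_neg (by omega : ¬ m' = 0)]
    rw [show (fun φ:ℝ => (-(m:ℝ) * Real.sin (m*φ)) * Real.sin (m'*φ))
        = fun φ:ℝ => -(m:ℝ) * (Real.sin (m*φ) * Real.sin (m'*φ)) from funext fun φ => by ring,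
      intervalIntegral.integral_const_mul, intSS]
    rw [if_neg (by omega : ¬ m = m')]
    by_cases h : m' = -m
    · rw [if_pos (by omega : m = -m'), if_pos h]; ring
    · rw [if_neg (by omega : ¬ m = -m'), if_neg h]; ring
  · simp [hm, if_pos hm', if_neg (by omega : ¬ m' = -(0:ℤ))]
  · simp [hm, hm']
  · simp [hm, if_neg (by omega : ¬ m' < 0), if_neg (by omega : ¬ m' = 0),
      if_neg (by omega : ¬ m' = -(0:ℤ))]
  · -- m>0, m'<0
    simp only [if_neg (by omega : ¬ m < 0), if_neg (by omega : ¬ m = 0), if_pos hm']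
    rw [show (fun φ:ℝ => ((m:ℝ) * Real.cos (m*φ)) * Real.cos (m'*φ))
        = fun φ:ℝ => (m:ℝ) * (Real.cos (m*φ) * Real.cos (m'*φ)) from funext fun φ => by ring,
      intervalIntegral.integral_const_mul, intCC]
    rw [if_neg (by omega : ¬ m = m')]
    by_cases h : m' = -m
    · rw [if_pos (by omega : m = -m'), if_pos h]; ring
    · rw [if_neg (by omega : ¬ m = -m'), if_neg h]; ring
  · simp only [hm', if_neg (by omega : ¬ m < 0), if_neg (by omega : ¬ m = 0),
      if_neg (by omega : ¬ (0:ℤ) < 0), eq_self_iff_true, if_true, mul_one]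
    rw [intervalIntegral.integral_const_mul, intJ, if_neg (by omega : ¬ m = 0),
      if_neg (by omega : ¬ (0:ℤ) = -m)]
    ring
  · -- m>0, m'>0
    simp only [if_neg (by omega : ¬ m < 0), if_neg (by omega : ¬ m = 0),
      if_neg (by omega : ¬ m' < 0), if_neg (by omega : ¬ m' = 0)]
    rw [show (fun φ:ℝ => ((m:ℝ) * Real.cos (m*φ)) * Real.sin (m'*φ))
        = fun φ:ℝ => (m:ℝ) * (Real.sin (m'*φ) * Real.cos (m*φ)) from funext fun φ => by ring,
      intervalIntegral.integral_const_mul, intSC]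
    rw [if_neg (by omega)]; ring

/-! ### Structure of `Xlm` -/

/-- The polynomial (Rodrigues) factor of `legendreP`. -/
noncomputable def Dfun (l n : ℕ) : ℝ → ℝ := iteratedDeriv (l+n) (fun t : ℝ => (t^2-1)^l)

/-- The constant prefactor of `Xlm`. -/
noncomputable def Ccst (l n : ℕ) : ℝ :=
  (-1:ℝ)^n * Real.sqrt ((2*(l:ℝ)+1)/(4*Real.pi)) *
    Real.sqrt ((Nat.factorial (l-n):ℝ)/(Nat.factorial (l+n):ℝ)) *
    (1/(2^l * (Nat.factorial l:ℝ)))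

private lemma Xlm_eq_s17 (l : ℕ) (a : ℤ) (ha : 0 ≤ a) (hal : a ≤ (l:ℤ)) (θ : ℝ) :
    Xlm l a θ = Ccst l a.toNat *
      ((1 - Real.cos θ^2) ^ ((a.toNat:ℝ)/2) * Dfun l a.toNat (Real.cos θ)) := by
  unfold Xlm legendreP Dfun Ccst
  rw [if_pos ⟨ha, hal⟩]
  ring

private lemma Dfun_contDiff (l n : ℕ) : ContDiff ℝ (⊤ : ℕ∞) (Dfun l n) := by
  rw [Dfun, iteratedDeriv_eq_iterate]
  exact ContDiff.iterate_deriv _ (((contDiff_id.pow 2).sub contDiff_const).pow l)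

/-- The smooth function equal to `Xlm l a * Xlm l' a` (for `1 ≤ a`). -/
noncomputable def Hfun (l l' n : ℕ) (θ : ℝ) : ℝ :=
  (1 - Real.cos θ^2)^n * (Dfun l n (Real.cos θ) * Dfun l' n (Real.cos θ))

private lemma Hfun_contDiff (l l' n : ℕ) : ContDiff ℝ (⊤ : ℕ∞) (Hfun l l' n) := by
  unfold Hfun
  exact ((contDiff_const.sub (Real.contDiff_cos.pow 2)).pow n).mul
    (((Dfun_contDiff l n).comp Real.contDiff_cos).mul
      ((Dfun_contDiff l' n).comp Real.contDiff_cos))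

private lemma prod_eq (l l' : ℕ) (a : ℤ) (ha : 1 ≤ a) (hal : a ≤ (l:ℤ)) (hal' : a ≤ (l':ℤ))
    (θ : ℝ) : Xlm l a θ * Xlm l' a θ
      = (Ccst l a.toNat * Ccst l' a.toNat) * Hfun l l' a.toNat θ := by
  rw [Xlm_eq_s17 l a (by omega) hal θ, Xlm_eq_s17 l' a (by omega) hal' θ]
  unfold Hfun
  have hx : (0:ℝ) ≤ 1 - Real.cos θ^2 := by nlinarith [Real.cos_sq_le_one θ]
  have hsum : ((a.toNat:ℝ)/2) + ((a.toNat:ℝ)/2) = ((a.toNat:ℕ):ℝ) := by ring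
  have key : (1 - Real.cos θ^2) ^ ((a.toNat:ℝ)/2) * (1 - Real.cos θ^2) ^ ((a.toNat:ℝ)/2)
      = (1 - Real.cos θ^2) ^ (a.toNat : ℕ) := by
    calc (1 - Real.cos θ^2) ^ ((a.toNat:ℝ)/2) * (1 - Real.cos θ^2) ^ ((a.toNat:ℝ)/2)
        = (1 - Real.cos θ^2) ^ ((a.toNat:ℝ)/2 + (a.toNat:ℝ)/2) :=
          (Real.rpow_add' hx (by rw [hsum]; exact_mod_cast (by omega : a.toNat ≠ 0))).symm
      _ = (1 - Real.cos θ^2) ^ ((a.toNat:ℕ):ℝ) := by rw [hsum]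
      _ = (1 - Real.cos θ^2) ^ (a.toNat : ℕ) := Real.rpow_natCast _ _
  have expand : Ccst l a.toNat *
        ((1 - Real.cos θ^2) ^ ((a.toNat:ℝ)/2) * Dfun l a.toNat (Real.cos θ)) *
      (Ccst l' a.toNat *
        ((1 - Real.cos θ^2) ^ ((a.toNat:ℝ)/2) * Dfun l' a.toNat (Real.cos θ)))
      = (Ccst l a.toNat * Ccst l' a.toNat) *
        (((1 - Real.cos θ^2) ^ ((a.toNat:ℝ)/2) * (1 - Real.cos θ^2) ^ ((a.toNat:ℝ)/2)) *
          (Dfun l a.toNat (Real.cos θ) * Dfun l' a.toNat (Real.cos θ))) := by ring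
  rw [expand, key]

private lemma Hfun_zero (l l' n : ℕ) (hn : n ≠ 0) : Hfun l l' n 0 = 0 := by
  unfold Hfun
  simp [Real.cos_zero, zero_pow hn]

private lemma Hfun_FTC (l l' n : ℕ) (Θ : ℝ) :
    (∫ θ in (0:ℝ)..Θ, deriv (Hfun l l' n) θ) = Hfun l l' n Θ - Hfun l l' n 0 :=
  intervalIntegral.integral_deriv_eq_sub
    (fun _ _ => ((Hfun_contDiff l l' n).differentiable (by norm_num)).differentiableAt)
    (((Hfun_contDiff l l' n).continuous_deriv (by norm_num)).intervalIntegrable _ _)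

private lemma Xlm_diffAt (l : ℕ) (a : ℤ) (ha : 0 ≤ a) (hal : a ≤ (l:ℤ)) (θ : ℝ)
    (hθ : 1 - Real.cos θ^2 ≠ 0) : DifferentiableAt ℝ (Xlm l a) θ := by
  have h : Xlm l a = fun θ => Ccst l a.toNat *
      ((1 - Real.cos θ^2) ^ ((a.toNat:ℝ)/2) * Dfun l a.toNat (Real.cos θ)) :=
    funext (Xlm_eq_s17 l a ha hal)
  rw [h]
  apply DifferentiableAt.const_mul
  apply DifferentiableAt.mul
  · exact (((differentiable_const (1:ℝ)).differentiableAt).sub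
      ((Real.differentiable_cos.differentiableAt).pow 2)).rpow_const (Or.inl hθ)
  · have hD := ((Dfun_contDiff l a.toNat).differentiable (by norm_num)).differentiableAt
      (x := Real.cos θ)
    have := DifferentiableAt.comp θ hD Real.differentiable_cos.differentiableAt
    exact this

private lemma deriv_prod_eq (l l' : ℕ) (a : ℤ) (ha : 1 ≤ a) (hal : a ≤ (l:ℤ))
    (hal' : a ≤ (l':ℤ)) (θ : ℝ) (hθ : 1 - Real.cos θ^2 ≠ 0) :
    deriv (Xlm l a) θ * Xlm l' a θ + Xlm l a θ * deriv (Xlm l' a) θ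
      = (Ccst l a.toNat * Ccst l' a.toNat) * deriv (Hfun l l' a.toNat) θ := by
  have h1 := Xlm_diffAt l a (by omega) hal θ hθ
  have h2 := Xlm_diffAt l' a (by omega) hal' θ hθ
  rw [← deriv_fun_mul h1 h2]
  have hfg : (fun θ => Xlm l a θ * Xlm l' a θ)
      = fun θ => (Ccst l a.toNat * Ccst l' a.toNat) * Hfun l l' a.toNat θ :=
    funext (prod_eq l l' a ha hal hal')
  rw [hfg, deriv_const_mul_field]

private lemma inner_int (l l' : ℕ) (m m' : ℤ) (θ : ℝ) :
    (∫ φ in (0:ℝ)..(2*Real.pi), dot3 (Bv l m θ φ) (Cv l' m' θ φ) * Real.sin θ)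
      = (Real.sqrt ((l:ℝ)*((l:ℝ)+1)))⁻¹ * (Real.sqrt ((l':ℝ)*((l':ℝ)+1)))⁻¹ *
        ((Real.sin θ)⁻¹ * Real.sin θ) *
        (deriv (Fth l m) θ * Fth l' m' θ * (if m' = -m then -(m:ℝ)*Real.pi else 0)
          - Fth l m θ * deriv (Fth l' m') θ * (if m' = -m then (m:ℝ)*Real.pi else 0)) := by
  set c : ℝ := (Real.sqrt ((l:ℝ)*((l:ℝ)+1)))⁻¹ with hc
  set c' : ℝ := (Real.sqrt ((l':ℝ)*((l':ℝ)+1)))⁻¹ with hc'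
  have e : ∀ φ, dot3 (Bv l m θ φ) (Cv l' m' θ φ) * Real.sin θ
      = (c * c' * ((Real.sin θ)⁻¹ * Real.sin θ) * (deriv (Fth l m) θ * Fth l' m' θ))
          * (gtrig m φ * dgtrig m' φ)
        + (-(c * c' * ((Real.sin θ)⁻¹ * Real.sin θ) * (Fth l m θ * deriv (Fth l' m') θ)))
          * (dgtrig m φ * gtrig m' φ) := by
    intro φ
    unfold dot3 Bv Cv
    rw [Fin.sum_univ_three]
    simp only [Pi.smul_apply, smul_eq_mul, Matrix.cons_val_zero, Matrix.cons_val_one,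
      Matrix.head_cons, Matrix.cons_val_two, Matrix.tail_cons]
    rw [deriv_Ysph_phi, deriv_Ysph_phi, deriv_Ysph_theta, deriv_Ysph_theta]
    ring
  rw [intervalIntegral.integral_congr (fun φ _ => e φ),
    intervalIntegral.integral_add
      ((continuous_const.fun_mul ((cont_gtrig m).fun_mul (cont_dgtrig m'))).intervalIntegrable _ _)
      ((continuous_const.fun_mul ((cont_dgtrig m).fun_mul (cont_gtrig m'))).intervalIntegrable _ _),
    intervalIntegral.integral_const_mul, intervalIntegral.integral_const_mul,
    intA1, intA2]
  ring

/-- For an axisymmetric polar cap of radius `Θ` the cross matrix elements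
between the tangential harmonics are
`D_{lm,l'm'} = -2π δ_{-m,m'} m X_{lm}(Θ) X_{l'm}(Θ)/√(l(l+1)l'(l'+1))`;
in particular `D_{lm,l'm'} = 0` whenever `m' ≠ -m` (so `D` vanishes on the
order-0 block). -/
theorem polar_cap_D_elements (l l' : ℕ) (hl : 1 ≤ l) (hl' : 1 ≤ l')
    (m m' : ℤ) (hm : |m| ≤ (l : ℤ)) (hm' : |m'| ≤ (l' : ℤ))
    (Θ : ℝ) (hΘ : Θ ∈ Set.Icc 0 Real.pi) :
    (∫ θ in (0 : ℝ)..Θ, ∫ φ in (0 : ℝ)..(2 * Real.pi),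
        dot3 (Bv l m θ φ) (Cv l' m' θ φ) * Real.sin θ) =
      if m' = -m then
        -(2 * Real.pi) * (m : ℝ) * Xlm l |m| Θ * Xlm l' |m| Θ /
          Real.sqrt ((l : ℝ) * ((l : ℝ) + 1) * ((l' : ℝ) * ((l' : ℝ) + 1)))
      else 0 := by
  obtain ⟨hΘ0, hΘπ⟩ := hΘ
  rw [intervalIntegral.integral_congr (fun θ _ => inner_int l l' m m' θ)]
  by_cases hmm : m' = -m
  · simp only [if_pos hmm]
    rcases eq_or_ne m 0 with hm0 | hm0
    · subst hm0
      norm_num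
    · set a : ℤ := |m| with ha
      have ha1 : 1 ≤ a := by have := abs_pos.mpr hm0; omega
      have hal : a ≤ (l:ℤ) := hm
      have hal' : a ≤ (l':ℤ) := by rwa [hmm, abs_neg] at hm'
      have hm'0 : m' ≠ 0 := by omega
      have F1 : Fth l m = fun θ => Real.sqrt 2 * Xlm l a θ := by
        funext θ; unfold Fth; rw [if_neg hm0]
      have F2 : Fth l' m' = fun θ => Real.sqrt 2 * Xlm l' a θ := by
        funext θ; unfold Fth; rw [if_neg hm'0, hmm, abs_neg]
      have dF1 : ∀ θ, deriv (Fth l m) θ = Real.sqrt 2 * deriv (Xlm l a) θ := by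
        intro θ; rw [F1, deriv_const_mul_field]
      have dF2 : ∀ θ, deriv (Fth l' m') θ = Real.sqrt 2 * deriv (Xlm l' a) θ := by
        intro θ; rw [F2, deriv_const_mul_field]
      have hs2 : Real.sqrt 2 * Real.sqrt 2 = 2 := Real.mul_self_sqrt (by norm_num)
      set K : ℝ := Ccst l a.toNat * Ccst l' a.toNat with hK
      set c : ℝ := (Real.sqrt ((l:ℝ)*((l:ℝ)+1)))⁻¹ with hc
      set c' : ℝ := (Real.sqrt ((l':ℝ)*((l':ℝ)+1)))⁻¹ with hc'
      have hae : ∀ᵐ x : ℝ, x ≠ Real.pi := by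
        have hs : {x : ℝ | ¬ x ≠ Real.pi} = {Real.pi} := by ext x; simp
        rw [MeasureTheory.ae_iff, hs]
        exact measure_singleton _
      have hcong : ∀ᵐ x : ℝ, x ∈ Set.uIoc (0:ℝ) Θ →
          c * c' * ((Real.sin x)⁻¹ * Real.sin x) *
            (deriv (Fth l m) x * Fth l' m' x * (-(m:ℝ)*Real.pi)
              - Fth l m x * deriv (Fth l' m') x * ((m:ℝ)*Real.pi))
          = (c * c' * (-(m:ℝ)*Real.pi) * 2 * K) * deriv (Hfun l l' a.toNat) x := by
        refine hae.mono fun x hx hmem => ?_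
        rw [Set.uIoc_of_le hΘ0] at hmem
        have hxπ : x < Real.pi := lt_of_le_of_ne (hmem.2.trans hΘπ) hx
        have hsin : Real.sin x ≠ 0 := ne_of_gt (Real.sin_pos_of_pos_of_lt_pi hmem.1 hxπ)
        have hcos : 1 - Real.cos x^2 ≠ 0 := by
          rw [← Real.sin_sq x]; exact pow_ne_zero 2 hsin
        have hdp := deriv_prod_eq l l' a ha1 hal hal' x hcos
        rw [inv_mul_cancel₀ hsin, dF1, dF2, F1, F2]
        rw [show c * c' * 1 *
            (Real.sqrt 2 * deriv (Xlm l a) x * ((fun θ => Real.sqrt 2 * Xlm l' a θ) x) *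
              (-(m:ℝ)*Real.pi)
            - (fun θ => Real.sqrt 2 * Xlm l a θ) x *
                (Real.sqrt 2 * deriv (Xlm l' a) x) * ((m:ℝ)*Real.pi))
            = (c * c' * (-(m:ℝ)*Real.pi) * (Real.sqrt 2 * Real.sqrt 2)) *
              (deriv (Xlm l a) x * Xlm l' a x + Xlm l a x * deriv (Xlm l' a) x) by ring,
          hdp, hs2]
        ring
      rw [intervalIntegral.integral_congr_ae hcong, intervalIntegral.integral_const_mul,
        Hfun_FTC, Hfun_zero l l' a.toNat (by omega), sub_zero]
      have hP := prod_eq l l' a ha1 hal hal' Θ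
      have hA : (0:ℝ) ≤ (l:ℝ)*((l:ℝ)+1) := by positivity
      rw [Real.sqrt_mul hA, div_eq_mul_inv, mul_inv]
      rw [← hc, ← hc']
      linear_combination (2*Real.pi*(m:ℝ)*c*c') * hP
  · rw [if_neg hmm]
    simp [if_neg hmm]
end
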